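/- arXiv:1104.1471 — 3 statements merged into one kernel-verified Lean document; each statement's English description precedes it below -/
import Mathlib

section
/- For bipolar vectors u, v, w in {-1,+1}^n with d₁ = d_H(u,v) ≥ 1 and d₂ = d_H(u,w) ≥ 1, the angle θ between v - u and w - u satisfies θ ≤ min(π/2, arccos√(d₁/n) + arccos√(d₂/n)). -/
lemma my_arccos_antitone {x y : ℝ} (h : x ≤ y) : Real.arccos y ≤ Real.arccos x := by
  unfold Real.arccos
  have := Real.monotone_arcsin h
  linarith

set_option maxHeartbeats 1000000 in
open scoped Classical in
theorem bipolar_angle_upper_bound (n : ℕ) (u v w : Fin n → ℝ)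
    (hu : ∀ t, u t = -1 ∨ u t = 1)
    (hv : ∀ t, v t = -1 ∨ v t = 1)
    (hw : ∀ t, w t = -1 ∨ w t = 1)
    (d₁ d₂ : ℕ)
    (hd₁ : d₁ = (Finset.univ.filter fun t => u t ≠ v t).card)
    (hd₂ : d₂ = (Finset.univ.filter fun t => u t ≠ w t).card)
    (hd₁pos : 1 ≤ d₁) (hd₂pos : 1 ≤ d₂) :
    Real.arccos ((∑ t, (v t - u t) * (w t - u t)) /
      (Real.sqrt (∑ t, (v t - u t)^2) * Real.sqrt (∑ t, (w t - u t)^2)))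
      ≤ min (Real.pi / 2)
        (Real.arccos (Real.sqrt (d₁ / n)) + Real.arccos (Real.sqrt (d₂ / n))) := by
  classical
  set A := Finset.univ.filter fun t => u t ≠ v t with hA
  set B := Finset.univ.filter fun t => u t ≠ w t with hB
  set k := (A ∩ B).card with hk
  -- pointwise computations
  have key1 : ∀ t, (v t - u t)^2 = if u t ≠ v t then (4:ℝ) else 0 := by
    intro t
    rcases hu t with h | h <;> rcases hv t with h' | h' <;> simp [h, h'] <;> norm_num
  have key1' : ∀ t, (w t - u t)^2 = if u t ≠ w t then (4:ℝ) else 0 := by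
    intro t
    rcases hu t with h | h <;> rcases hw t with h' | h' <;> simp [h, h'] <;> norm_num
  have key2 : ∀ t, (v t - u t) * (w t - u t)
      = if (u t ≠ v t) ∧ (u t ≠ w t) then (4:ℝ) else 0 := by
    intro t
    rcases hu t with h | h <;> rcases hv t with h' | h' <;> rcases hw t with h'' | h''
      <;> simp [h, h', h''] <;> norm_num
  have hs1 : ∑ t, (v t - u t)^2 = 4 * (d₁ : ℝ) := by
    simp only [key1]
    rw [← Finset.sum_filter, Finset.sum_const, nsmul_eq_mul, ← hA, hd₁]
    ring
  have hs2 : ∑ t, (w t - u t)^2 = 4 * (d₂ : ℝ) := by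
    simp only [key1']
    rw [← Finset.sum_filter, Finset.sum_const, nsmul_eq_mul, ← hB, hd₂]
    ring
  have hs3 : ∑ t, (v t - u t) * (w t - u t) = 4 * (k : ℝ) := by
    simp only [key2]
    rw [← Finset.sum_filter, Finset.sum_const, nsmul_eq_mul, Finset.filter_and, ← hA, ← hB, hk]
    ring
  have hd1n : d₁ ≤ n := hd₁ ▸ (by simpa using Finset.card_le_univ A)
  have hd2n : d₂ ≤ n := hd₂ ▸ (by simpa using Finset.card_le_univ B)
  have hkn : d₁ + d₂ ≤ k + n := by
    have h1 := Finset.card_union_add_card_inter A B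
    have h2 : (A ∪ B).card ≤ n := by simpa using Finset.card_le_univ (A ∪ B)
    omega
  -- real abbreviations
  have hNpos : (0:ℝ) < (n:ℝ) := by
    have : 1 ≤ n := le_trans hd₁pos hd1n
    exact_mod_cast Nat.lt_of_lt_of_le Nat.zero_lt_one this
  have hD1pos : (0:ℝ) < (d₁:ℝ) := by exact_mod_cast hd₁pos
  have hD2pos : (0:ℝ) < (d₂:ℝ) := by exact_mod_cast hd₂pos
  have hD1N : (d₁:ℝ) ≤ (n:ℝ) := by exact_mod_cast hd1n
  have hD2N : (d₂:ℝ) ≤ (n:ℝ) := by exact_mod_cast hd2n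
  have hKnn : (0:ℝ) ≤ (k:ℝ) := Nat.cast_nonneg k
  have hKN : (d₁:ℝ) + (d₂:ℝ) ≤ (k:ℝ) + (n:ℝ) := by exact_mod_cast hkn
  -- simplify norms
  have hsq1 : Real.sqrt (4 * (d₁:ℝ)) = 2 * Real.sqrt (d₁:ℝ) := by
    rw [show (4:ℝ) * (d₁:ℝ) = 2^2 * (d₁:ℝ) by ring, Real.sqrt_mul (by positivity),
      Real.sqrt_sq (by norm_num)]
  have hsq2 : Real.sqrt (4 * (d₂:ℝ)) = 2 * Real.sqrt (d₂:ℝ) := by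
    rw [show (4:ℝ) * (d₂:ℝ) = 2^2 * (d₂:ℝ) by ring, Real.sqrt_mul (by positivity),
      Real.sqrt_sq (by norm_num)]
  have hden : Real.sqrt (∑ t, (v t - u t)^2) * Real.sqrt (∑ t, (w t - u t)^2)
      = 4 * (Real.sqrt (d₁:ℝ) * Real.sqrt (d₂:ℝ)) := by
    rw [hs1, hs2, hsq1, hsq2]; ring
  have hsd1 : (0:ℝ) < Real.sqrt (d₁:ℝ) := Real.sqrt_pos.mpr hD1pos
  have hsd2 : (0:ℝ) < Real.sqrt (d₂:ℝ) := Real.sqrt_pos.mpr hD2pos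
  have hcval : (∑ t, (v t - u t) * (w t - u t)) /
      (Real.sqrt (∑ t, (v t - u t)^2) * Real.sqrt (∑ t, (w t - u t)^2))
      = (k:ℝ) / (Real.sqrt (d₁:ℝ) * Real.sqrt (d₂:ℝ)) := by
    rw [hs3, hden, mul_div_mul_left _ _ (by norm_num : (4:ℝ) ≠ 0)]
  rw [hcval]
  have hcnn : 0 ≤ (k:ℝ) / (Real.sqrt (d₁:ℝ) * Real.sqrt (d₂:ℝ)) := by positivity
  refine le_min (Real.arccos_le_pi_div_two.mpr hcnn) ?_
  -- second bound
  have hx₁nn : 0 ≤ Real.sqrt ((d₁:ℝ) / (n:ℝ)) := Real.sqrt_nonneg _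
  have hx₂nn : 0 ≤ Real.sqrt ((d₂:ℝ) / (n:ℝ)) := Real.sqrt_nonneg _
  have hx₁le : Real.sqrt ((d₁:ℝ) / (n:ℝ)) ≤ 1 :=
    Real.sqrt_le_one.mpr (by rw [div_le_one hNpos]; exact hD1N)
  have hx₂le : Real.sqrt ((d₂:ℝ) / (n:ℝ)) ≤ 1 :=
    Real.sqrt_le_one.mpr (by rw [div_le_one hNpos]; exact hD2N)
  set α := Real.arccos (Real.sqrt ((d₁:ℝ) / (n:ℝ))) with hαdef
  set β := Real.arccos (Real.sqrt ((d₂:ℝ) / (n:ℝ))) with hβdef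
  have hα : α ≤ Real.pi / 2 := Real.arccos_le_pi_div_two.mpr hx₁nn
  have hβ : β ≤ Real.pi / 2 := Real.arccos_le_pi_div_two.mpr hx₂nn
  have hαnn : 0 ≤ α := Real.arccos_nonneg _
  have hβnn : 0 ≤ β := Real.arccos_nonneg _
  have hx₁sq : Real.sqrt ((d₁:ℝ) / (n:ℝ)) ^ 2 = (d₁:ℝ) / (n:ℝ) := Real.sq_sqrt (by positivity)
  have hx₂sq : Real.sqrt ((d₂:ℝ) / (n:ℝ)) ^ 2 = (d₂:ℝ) / (n:ℝ) := Real.sq_sqrt (by positivity)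
  have hP : (0:ℝ) ≤ (n:ℝ) - (d₁:ℝ) := by linarith
  have hQ : (0:ℝ) ≤ (n:ℝ) - (d₂:ℝ) := by linarith
  have h1x₁ : 1 - (d₁:ℝ)/(n:ℝ) = ((n:ℝ) - (d₁:ℝ)) / (n:ℝ) := by field_simp
  have h1x₂ : 1 - (d₂:ℝ)/(n:ℝ) = ((n:ℝ) - (d₂:ℝ)) / (n:ℝ) := by field_simp
  have hsN : Real.sqrt (n:ℝ) * Real.sqrt (n:ℝ) = (n:ℝ) := Real.mul_self_sqrt hNpos.le
  have hcos : Real.cos (α + β)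
      = (Real.sqrt (d₁:ℝ) * Real.sqrt (d₂:ℝ)
        - Real.sqrt ((n:ℝ)-(d₁:ℝ)) * Real.sqrt ((n:ℝ)-(d₂:ℝ))) / (n:ℝ) := by
    rw [Real.cos_add, hαdef, hβdef, Real.cos_arccos (by linarith) hx₁le,
      Real.cos_arccos (by linarith) hx₂le, Real.sin_arccos, Real.sin_arccos,
      hx₁sq, hx₂sq, h1x₁, h1x₂,
      Real.sqrt_div hD1pos.le, Real.sqrt_div hD2pos.le, Real.sqrt_div hP, Real.sqrt_div hQ,
      div_mul_div_comm, div_mul_div_comm, hsN, ← sub_div]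
  have hcosle : Real.cos (α + β) ≤ (k:ℝ) / (Real.sqrt (d₁:ℝ) * Real.sqrt (d₂:ℝ)) := by
    rw [hcos, div_le_div_iff₀ hNpos (by positivity)]
    have hm1 : Real.sqrt (d₁:ℝ) * Real.sqrt (d₁:ℝ) = (d₁:ℝ) := Real.mul_self_sqrt hD1pos.le
    have hm2 : Real.sqrt (d₂:ℝ) * Real.sqrt (d₂:ℝ) = (d₂:ℝ) := Real.mul_self_sqrt hD2pos.le
    have hm3 : Real.sqrt ((n:ℝ)-(d₁:ℝ)) * Real.sqrt ((n:ℝ)-(d₁:ℝ)) = (n:ℝ)-(d₁:ℝ) :=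
      Real.mul_self_sqrt hP
    have hm4 : Real.sqrt ((n:ℝ)-(d₂:ℝ)) * Real.sqrt ((n:ℝ)-(d₂:ℝ)) = (n:ℝ)-(d₂:ℝ) :=
      Real.mul_self_sqrt hQ
    have hp3 : (0:ℝ) ≤ Real.sqrt ((n:ℝ)-(d₁:ℝ)) := Real.sqrt_nonneg _
    have hp4 : (0:ℝ) ≤ Real.sqrt ((n:ℝ)-(d₂:ℝ)) := Real.sqrt_nonneg _
    rcases le_total ((d₁:ℝ) * (d₂:ℝ)) (((n:ℝ)-(d₁:ℝ)) * ((n:ℝ)-(d₂:ℝ))) with hcase | hcase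
    · -- √(d₁d₂) ≤ √(PQ), so LHS ≤ 0
      have hle : Real.sqrt (d₁:ℝ) * Real.sqrt (d₂:ℝ)
          ≤ Real.sqrt ((n:ℝ)-(d₁:ℝ)) * Real.sqrt ((n:ℝ)-(d₂:ℝ)) := by
        rw [← Real.sqrt_mul hD1pos.le, ← Real.sqrt_mul hP]
        exact Real.sqrt_le_sqrt hcase
      have h0 : (Real.sqrt (d₁:ℝ) * Real.sqrt (d₂:ℝ)
          - Real.sqrt ((n:ℝ)-(d₁:ℝ)) * Real.sqrt ((n:ℝ)-(d₂:ℝ)))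
          * (Real.sqrt (d₁:ℝ) * Real.sqrt (d₂:ℝ)) ≤ 0 :=
        mul_nonpos_of_nonpos_of_nonneg (by linarith) (mul_pos hsd1 hsd2).le
      have h1 : (0:ℝ) ≤ (k:ℝ) * (n:ℝ) := mul_nonneg hKnn hNpos.le
      linarith
    · have hle : Real.sqrt ((n:ℝ)-(d₁:ℝ)) * Real.sqrt ((n:ℝ)-(d₂:ℝ))
          ≤ Real.sqrt (d₁:ℝ) * Real.sqrt (d₂:ℝ) := by
        rw [← Real.sqrt_mul hD1pos.le, ← Real.sqrt_mul hP]
        exact Real.sqrt_le_sqrt hcase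
      have h1 : (Real.sqrt ((n:ℝ)-(d₁:ℝ)) * Real.sqrt ((n:ℝ)-(d₂:ℝ)))
          * (Real.sqrt ((n:ℝ)-(d₁:ℝ)) * Real.sqrt ((n:ℝ)-(d₂:ℝ)))
          ≤ (Real.sqrt ((n:ℝ)-(d₁:ℝ)) * Real.sqrt ((n:ℝ)-(d₂:ℝ)))
            * (Real.sqrt (d₁:ℝ) * Real.sqrt (d₂:ℝ)) :=
        mul_le_mul_of_nonneg_left hle (mul_nonneg hp3 hp4)
      have hab : (Real.sqrt (d₁:ℝ) * Real.sqrt (d₂:ℝ)) * (Real.sqrt (d₁:ℝ) * Real.sqrt (d₂:ℝ))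
          = (d₁:ℝ) * (d₂:ℝ) := by rw [mul_mul_mul_comm, hm1, hm2]
      have hpq : (Real.sqrt ((n:ℝ)-(d₁:ℝ)) * Real.sqrt ((n:ℝ)-(d₂:ℝ)))
          * (Real.sqrt ((n:ℝ)-(d₁:ℝ)) * Real.sqrt ((n:ℝ)-(d₂:ℝ)))
          = ((n:ℝ)-(d₁:ℝ)) * ((n:ℝ)-(d₂:ℝ)) := by rw [mul_mul_mul_comm, hm3, hm4]
      have hmul : (n:ℝ)*((d₁:ℝ)+(d₂:ℝ)) ≤ (n:ℝ)*((k:ℝ)+(n:ℝ)) :=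
        mul_le_mul_of_nonneg_left hKN hNpos.le
      have hstep : (d₁:ℝ)*(d₂:ℝ) - ((n:ℝ)-(d₁:ℝ))*((n:ℝ)-(d₂:ℝ)) ≤ (k:ℝ) * (n:ℝ) := by
        have hr : (d₁:ℝ)*(d₂:ℝ) - ((n:ℝ)-(d₁:ℝ))*((n:ℝ)-(d₂:ℝ))
            = (n:ℝ)*((d₁:ℝ)+(d₂:ℝ)) - (n:ℝ)*(n:ℝ) := by ring
        have hr2 : (n:ℝ)*((k:ℝ)+(n:ℝ)) = (k:ℝ)*(n:ℝ) + (n:ℝ)*(n:ℝ) := by ring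
        linarith
      have e : (Real.sqrt (d₁:ℝ) * Real.sqrt (d₂:ℝ)
          - Real.sqrt ((n:ℝ)-(d₁:ℝ)) * Real.sqrt ((n:ℝ)-(d₂:ℝ)))
          * (Real.sqrt (d₁:ℝ) * Real.sqrt (d₂:ℝ))
          = (Real.sqrt (d₁:ℝ) * Real.sqrt (d₂:ℝ)) * (Real.sqrt (d₁:ℝ) * Real.sqrt (d₂:ℝ))
            - (Real.sqrt ((n:ℝ)-(d₁:ℝ)) * Real.sqrt ((n:ℝ)-(d₂:ℝ)))
              * (Real.sqrt (d₁:ℝ) * Real.sqrt (d₂:ℝ)) := by ring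
      rw [e, hab]
      linarith [h1, hpq.symm.le, hpq.le]
  have hsum_le_pi : α + β ≤ Real.pi := by linarith
  have hfin := my_arccos_antitone hcosle
  rw [Real.arccos_cos (by linarith) hsum_le_pi] at hfin
  exact hfin
end

section
/- Let f(x) = (1/(√(2π)σ)) e^{−x²/(2σ²)} and define P(θ) = Q(√d/σ) + ∫_{√d}^{∞} f(ξ₁) ∫_{−∞}^{(√d − ξ₁ cos θ)/sin θ} f(ξ₂) dξ₂ dξ₁ for θ ∈ (0, π/2]. Then P is non-decreasing in θ, and P(π/2) = 2Q(√d/σ) − Q(√d/σ)². -/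
open MeasureTheory

noncomputable def Qfun (x : ℝ) : ℝ :=
  ∫ z in Set.Ici x, (1 / Real.sqrt (2 * Real.pi)) * Real.exp (-z ^ 2 / 2)

noncomputable def gaussPdf (σ x : ℝ) : ℝ :=
  (1 / (Real.sqrt (2 * Real.pi) * σ)) * Real.exp (-x ^ 2 / (2 * σ ^ 2))

noncomputable def tripletProb (d σ θ : ℝ) : ℝ :=
  Qfun (Real.sqrt d / σ) +
    ∫ ξ₁ in Set.Ici (Real.sqrt d),
      gaussPdf σ ξ₁ *
        ∫ ξ₂ in Set.Iic ((Real.sqrt d - ξ₁ * Real.cos θ) / Real.sin θ),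
          gaussPdf σ ξ₂

section Aux

open Set Real

noncomputable def Fcdf (σ x : ℝ) : ℝ := ∫ t in Set.Iic x, gaussPdf σ t

lemma gaussPdf_nonneg {σ : ℝ} (hσ : 0 < σ) (x : ℝ) : 0 ≤ gaussPdf σ x := by
  unfold gaussPdf
  positivity

lemma gaussPdf_eq (σ : ℝ) :
    gaussPdf σ = fun x => (1 / (Real.sqrt (2 * Real.pi) * σ)) *
      Real.exp (-(1 / (2 * σ ^ 2)) * x ^ 2) := by
  funext x
  unfold gaussPdf
  ring_nf

lemma gaussPdf_integrable {σ : ℝ} (hσ : 0 < σ) : Integrable (gaussPdf σ) := by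
  rw [gaussPdf_eq]
  exact (integrable_exp_neg_mul_sq (by positivity)).const_mul _

lemma gaussPdf_total {σ : ℝ} (hσ : 0 < σ) : ∫ x, gaussPdf σ x = 1 := by
  rw [gaussPdf_eq]
  rw [MeasureTheory.integral_const_mul, integral_gaussian]
  have h1 : Real.pi / (1 / (2 * σ ^ 2)) = (2 * Real.pi) * σ ^ 2 := by
    field_simp
  have h4 : Real.sqrt (2 * Real.pi * σ ^ 2) = Real.sqrt (2 * Real.pi) * σ := by
    rw [Real.sqrt_mul (by positivity : (0:ℝ) ≤ 2 * Real.pi) (σ ^ 2), Real.sqrt_sq hσ.le]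
  rw [h1, h4]
  have h2 : Real.sqrt (2 * Real.pi) ≠ 0 := by positivity
  field_simp

lemma Fcdf_mono {σ : ℝ} (hσ : 0 < σ) : Monotone (Fcdf σ) := by
  intro x y hxy
  exact setIntegral_mono_set ((gaussPdf_integrable hσ).integrableOn)
    (Filter.Eventually.of_forall fun t => gaussPdf_nonneg hσ t)
    (HasSubset.Subset.eventuallyLE (Set.Iic_subset_Iic.mpr hxy))

lemma Fcdf_nonneg {σ : ℝ} (hσ : 0 < σ) (x : ℝ) : 0 ≤ Fcdf σ x :=
  setIntegral_nonneg measurableSet_Iic fun t _ => gaussPdf_nonneg hσ t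

lemma Fcdf_le_one {σ : ℝ} (hσ : 0 < σ) (x : ℝ) : Fcdf σ x ≤ 1 := by
  rw [← gaussPdf_total hσ]
  exact setIntegral_le_integral (gaussPdf_integrable hσ)
    (Filter.Eventually.of_forall fun t => gaussPdf_nonneg hσ t)

lemma integral_Ici_gaussPdf {σ : ℝ} (hσ : 0 < σ) (a : ℝ) :
    ∫ x in Set.Ici a, gaussPdf σ x = Qfun (a / σ) := by
  rw [MeasureTheory.integral_Ici_eq_integral_Ioi]
  have h := MeasureTheory.integral_comp_mul_right_Ioi (gaussPdf σ) (a / σ) hσ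
  rw [div_mul_cancel₀ a hσ.ne'] at h
  have h2 : ∫ x in Set.Ioi a, gaussPdf σ x
      = σ • ∫ x in Set.Ioi (a / σ), gaussPdf σ (x * σ) := by
    rw [h, smul_smul, mul_inv_cancel₀ hσ.ne', one_smul]
  rw [h2, ← MeasureTheory.integral_smul]
  rw [Qfun, MeasureTheory.integral_Ici_eq_integral_Ioi]
  congr 1
  funext x
  unfold gaussPdf
  rw [smul_eq_mul]
  have h3 : -(x * σ) ^ 2 / (2 * σ ^ 2) = -x ^ 2 / 2 := by
    field_simp
  rw [h3]
  field_simp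

lemma Fcdf_eq {σ : ℝ} (hσ : 0 < σ) (a : ℝ) : Fcdf σ a = 1 - Qfun (a / σ) := by
  have h := intervalIntegral.integral_Iic_add_Ioi
    ((gaussPdf_integrable hσ).integrableOn (s := Set.Iic a))
    ((gaussPdf_integrable hσ).integrableOn (s := Set.Ioi a))
  rw [gaussPdf_total hσ] at h
  have h2 : ∫ x in Set.Ioi a, gaussPdf σ x = Qfun (a / σ) := by
    rw [← MeasureTheory.integral_Ici_eq_integral_Ioi, integral_Ici_gaussPdf hσ]
  rw [Fcdf]
  linarith [h, h2]

lemma limit_mono {s x θ θ' : ℝ} (hs : 0 ≤ s) (hx : s ≤ x) (hθ : 0 < θ)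
    (hθθ' : θ ≤ θ') (hθ' : θ' ≤ Real.pi / 2) :
    (s - x * Real.cos θ) / Real.sin θ ≤ (s - x * Real.cos θ') / Real.sin θ' := by
  have hsθ : 0 < Real.sin θ :=
    Real.sin_pos_of_pos_of_lt_pi hθ (lt_of_le_of_lt (hθθ'.trans hθ')
      (by linarith [Real.pi_pos]))
  have hsθ' : 0 < Real.sin θ' :=
    Real.sin_pos_of_pos_of_lt_pi (hθ.trans_le hθθ')
      (lt_of_le_of_lt hθ' (by linarith [Real.pi_pos]))
  rw [div_le_div_iff₀ hsθ hsθ']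
  -- reduce to: s * (sin θ' - sin θ) ≤ x * sin (θ' - θ)
  have key : s * (Real.sin θ' - Real.sin θ) ≤ x * Real.sin (θ' - θ) := by
    rw [Real.sin_sub_sin]
    have hu : Real.sin ((θ' - θ) / 2) ≥ 0 := by
      apply Real.sin_nonneg_of_nonneg_of_le_pi <;>
        nlinarith [Real.pi_pos]
    have h2 : Real.sin (θ' - θ) =
        2 * Real.sin ((θ' - θ) / 2) * Real.cos ((θ' - θ) / 2) := by
      rw [← Real.sin_two_mul]; ring_nf
    rw [h2]
    have hcv : Real.cos ((θ' + θ) / 2) ≤ Real.cos ((θ' - θ) / 2) := by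
      apply Real.cos_le_cos_of_nonneg_of_le_pi <;> nlinarith [Real.pi_pos]
    have hcu : 0 ≤ Real.cos ((θ' - θ) / 2) := by
      apply Real.cos_nonneg_of_mem_Icc
      constructor <;> nlinarith [Real.pi_pos]
    have hmul : s * Real.cos ((θ' + θ) / 2) ≤ x * Real.cos ((θ' - θ) / 2) := by
      calc s * Real.cos ((θ' + θ) / 2) ≤ s * Real.cos ((θ' - θ) / 2) := by
            exact mul_le_mul_of_nonneg_left hcv hs
        _ ≤ x * Real.cos ((θ' - θ) / 2) := by
            exact mul_le_mul_of_nonneg_right hx hcu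
    nlinarith [hu, hmul]
  have hsin : Real.sin (θ' - θ) = Real.sin θ' * Real.cos θ - Real.cos θ' * Real.sin θ :=
    Real.sin_sub θ' θ
  nlinarith [key, hsin]

lemma integrand_integrable {σ : ℝ} (hσ : 0 < σ) (s c t : ℝ) :
    IntegrableOn (fun ξ₁ => gaussPdf σ ξ₁ * Fcdf σ ((s - ξ₁ * c) / t)) (Set.Ici s) := by
  have hmeas : Measurable (fun ξ₁ => gaussPdf σ ξ₁ * Fcdf σ ((s - ξ₁ * c) / t)) := by
    apply Measurable.mul
    · exact (Continuous.measurable (by rw [gaussPdf_eq]; fun_prop))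
    · exact (Fcdf_mono hσ).measurable.comp (by fun_prop)
  apply Integrable.mono ((gaussPdf_integrable hσ).integrableOn)
    (hmeas.aestronglyMeasurable.restrict)
  apply Filter.Eventually.of_forall
  intro x
  rw [Real.norm_eq_abs, Real.norm_eq_abs, abs_of_nonneg (gaussPdf_nonneg hσ x),
    abs_of_nonneg (mul_nonneg (gaussPdf_nonneg hσ x) (Fcdf_nonneg hσ _))]
  calc gaussPdf σ x * Fcdf σ ((s - x * c) / t)
      ≤ gaussPdf σ x * 1 :=
        mul_le_mul_of_nonneg_left (Fcdf_le_one hσ _) (gaussPdf_nonneg hσ x)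
    _ = gaussPdf σ x := mul_one _

end Aux

theorem tripletProb_mono_and_value (d σ : ℝ) (hd : 0 < d) (hσ : 0 < σ) :
    (∀ θ θ' : ℝ, 0 < θ → θ ≤ θ' → θ' ≤ Real.pi / 2 →
        tripletProb d σ θ ≤ tripletProb d σ θ') ∧
    tripletProb d σ (Real.pi / 2) =
      2 * Qfun (Real.sqrt d / σ) - Qfun (Real.sqrt d / σ) ^ 2 := by
  have hs : 0 ≤ Real.sqrt d := Real.sqrt_nonneg d
  constructor
  · intro θ θ' hθ hθθ' hθ'
    unfold tripletProb
    gcongr ?_ + ?_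
    · exact le_refl _
    · apply setIntegral_mono_on
      · exact integrand_integrable hσ _ _ _
      · exact integrand_integrable hσ _ _ _
      · exact measurableSet_Ici
      · intro x hx
        exact mul_le_mul_of_nonneg_left
          (Fcdf_mono hσ (limit_mono hs hx hθ hθθ' hθ'))
          (gaussPdf_nonneg hσ x)
  · unfold tripletProb
    have hlim : ∀ x : ℝ, (Real.sqrt d - x * Real.cos (Real.pi / 2)) / Real.sin (Real.pi / 2)
        = Real.sqrt d := by
      intro x; rw [Real.cos_pi_div_two, Real.sin_pi_div_two]; ring
    have h2 : (∫ ξ₁ in Set.Ici (Real.sqrt d),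
        gaussPdf σ ξ₁ * ∫ ξ₂ in Set.Iic ((Real.sqrt d - ξ₁ * Real.cos (Real.pi / 2)) /
          Real.sin (Real.pi / 2)), gaussPdf σ ξ₂)
        = (∫ ξ₁ in Set.Ici (Real.sqrt d), gaussPdf σ ξ₁) * Fcdf σ (Real.sqrt d) := by
      rw [← MeasureTheory.integral_mul_const]
      congr 1
      funext x
      rw [hlim x]
      rfl
    rw [h2, integral_Ici_gaussPdf hσ, Fcdf_eq hσ]
    ring
end

section
/- Under the setting of the pairwise error event: with s the all-ones vector, y = s + z with z i.i.d. N(0,σ²), c⁽¹⁾ differing from s in exactly the first d coordinates, ŷ the componentwise sign hard decision (ŷ_t = 0 if y_t > 0, else 1), and W_H(ŷ) the number of non-positive coordinates of y: P({‖y − c⁽¹⁾‖ ≤ ‖y − s‖} ∩ {W_H(ŷ) ≤ d*}) ≤ Q(√d/σ) · B(p_b, n−d, 0, d*−1), where p_b = Q(1/σ). -/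
open MeasureTheory ProbabilityTheory Real NNReal ENNReal

lemma coe_pos_of_ne {a : ℝ≥0} (ha : a ≠ 0) : (0:ℝ) < a := by
  exact_mod_cast ha.bot_lt

lemma pdf_mul (a b : ℝ≥0) (ha : a ≠ 0) (hb : b ≠ 0) (u x : ℝ) :
    gaussianPDFReal 0 a x * gaussianPDFReal 0 b (u - x) =
      gaussianPDFReal 0 (a + b) u *
        gaussianPDFReal ((a : ℝ) * u / ((a : ℝ) + b)) (a * b / (a + b)) x := by
  have hA : (0:ℝ) < a := coe_pos_of_ne ha
  have hB : (0:ℝ) < b := coe_pos_of_ne hb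
  have hC : (0:ℝ) < (a:ℝ) + b := by linarith
  have hπ : (0:ℝ) < 2 * π := by positivity
  have hcoe : ((a * b / (a + b) : ℝ≥0) : ℝ) = (a:ℝ) * b / ((a:ℝ) + b) := by
    push_cast; ring
  simp only [gaussianPDFReal, NNReal.coe_add, hcoe, sub_zero]
  conv_lhs => rw [mul_mul_mul_comm, ← mul_inv, ← Real.sqrt_mul (by positivity), ← Real.exp_add]
  conv_rhs => rw [mul_mul_mul_comm, ← mul_inv, ← Real.sqrt_mul (by positivity), ← Real.exp_add]
  congr 2
  · field_simp
  · field_simp; ring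

lemma pdf_conv (a b : ℝ≥0) (ha : a ≠ 0) (hb : b ≠ 0) (u : ℝ) :
    ∫ x, gaussianPDFReal 0 a x * gaussianPDFReal 0 b (u - x) =
      gaussianPDFReal 0 (a + b) u := by
  have hab : a * b / (a + b) ≠ 0 := by
    have : a + b ≠ 0 := by simp [ha]
    simp [div_eq_zero_iff, mul_eq_zero, ha, hb, this]
  simp_rw [pdf_mul a b ha hb u]
  rw [integral_const_mul, integral_gaussianPDFReal_eq_one _ hab, mul_one]

lemma pdf_conv_lintegral (a b : ℝ≥0) (ha : a ≠ 0) (hb : b ≠ 0) (u : ℝ) :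
    ∫⁻ x, gaussianPDF 0 a x * gaussianPDF 0 b (u - x) = gaussianPDF 0 (a + b) u := by
  have hab : a * b / (a + b) ≠ 0 := by
    have : a + b ≠ 0 := by simp [ha]
    simp [div_eq_zero_iff, mul_eq_zero, ha, hb, this]
  simp_rw [gaussianPDF, ← ENNReal.ofReal_mul (gaussianPDFReal_nonneg 0 a _)]
  rw [← MeasureTheory.ofReal_integral_eq_lintegral_ofReal]
  · rw [pdf_conv a b ha hb u]
  · simp_rw [pdf_mul a b ha hb u]
    exact (integrable_gaussianPDFReal _ _).const_mul _
  · exact ae_of_all _ fun x => mul_nonneg (gaussianPDFReal_nonneg _ _ _) (gaussianPDFReal_nonneg _ _ _)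

lemma gauss_conv (a b : ℝ≥0) (ha : a ≠ 0) (hb : b ≠ 0) :
    Measure.map (fun p : ℝ × ℝ => p.1 + p.2) ((gaussianReal 0 a).prod (gaussianReal 0 b)) =
      gaussianReal 0 (a + b) := by
  have hab : a + b ≠ 0 := by simp [ha]
  have hmeas_add : Measurable fun p : ℝ × ℝ => p.1 + p.2 := measurable_fst.add measurable_snd
  have : IsProbabilityMeasure ((gaussianReal 0 a).prod (gaussianReal 0 b)) := by infer_instance
  have hPM : IsProbabilityMeasure
      (Measure.map (fun p : ℝ × ℝ => p.1 + p.2) ((gaussianReal 0 a).prod (gaussianReal 0 b))) :=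
    Measure.isProbabilityMeasure_map hmeas_add.aemeasurable
  refine MeasureTheory.Measure.ext_of_Iic _ _ fun t => ?_
  rw [Measure.map_apply hmeas_add measurableSet_Iic, Measure.prod_apply (hmeas_add measurableSet_Iic)]
  have hset : ∀ x : ℝ, (Prod.mk x ⁻¹' ((fun p : ℝ × ℝ => p.1 + p.2) ⁻¹' Set.Iic t)) = Set.Iic (t - x) := by
    intro x; ext y; simp only [Set.mem_preimage, Set.mem_Iic]; constructor <;> intro h <;> linarith
  simp_rw [hset]
  set ind : ℝ → ℝ≥0∞ := (Set.Iic t).indicator (fun _ => 1) with hind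
  have hindmeas : Measurable ind := measurable_const.indicator measurableSet_Iic
  have key : ∀ x : ℝ, gaussianReal 0 b (Set.Iic (t - x)) =
      ∫⁻ y, ind (x + y) * gaussianPDF 0 b y := by
    intro x
    rw [gaussianReal_apply 0 hb, ← lintegral_indicator measurableSet_Iic _]
    congr 1; ext y
    by_cases h : y ≤ t - x
    · rw [Set.indicator_of_mem (Set.mem_Iic.2 h), hind,
        Set.indicator_of_mem (Set.mem_Iic.2 (by linarith)), one_mul]
    · rw [Set.indicator_of_notMem (fun hy => h (Set.mem_Iic.1 hy)), hind,
        Set.indicator_of_notMem (fun hy => h ?_), zero_mul]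
      have := Set.mem_Iic.1 hy; linarith
  simp_rw [key]
  have hmb : Measurable fun y => gaussianPDF 0 b y := measurable_gaussianPDF 0 b
  have step : ∀ x, gaussianPDF 0 a x * ∫⁻ y, ind (x + y) * gaussianPDF 0 b y =
      ∫⁻ y, ind (x + y) * (gaussianPDF 0 a x * gaussianPDF 0 b y) := by
    intro x
    have h1 : Measurable fun y : ℝ => ind (x + y) * gaussianPDF 0 b y :=
      (hindmeas.comp (measurable_const.add measurable_id)).mul hmb
    rw [← lintegral_const_mul _ h1]
    congr 1; ext y; ring
  rw [gaussianReal_of_var_ne_zero 0 ha,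
    lintegral_withDensity_eq_lintegral_mul _ (measurable_gaussianPDF 0 a)
      (by
        have h2 : Measurable (Function.uncurry fun x y : ℝ => ind (x + y) * gaussianPDF 0 b y) :=
          (hindmeas.comp (measurable_fst.add measurable_snd)).mul (hmb.comp measurable_snd)
        exact h2.lintegral_prod_right)]
  simp only [Pi.mul_apply]
  simp_rw [step]
  have tr : ∀ x, (∫⁻ y, ind (x + y) * (gaussianPDF 0 a x * gaussianPDF 0 b y)) =
      ∫⁻ u, ind u * (gaussianPDF 0 a x * gaussianPDF 0 b (u - x)) := by
    intro x
    have := lintegral_add_left_eq_self (μ := volume)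
      (fun u => ind u * (gaussianPDF 0 a x * gaussianPDF 0 b (u - x))) x
    simpa using this
  simp_rw [tr]
  rw [lintegral_lintegral_swap]
  · have fin : ∀ u, (∫⁻ x, ind u * (gaussianPDF 0 a x * gaussianPDF 0 b (u - x))) =
        ind u * gaussianPDF 0 (a + b) u := by
      intro u
      have h3 : Measurable fun x : ℝ => gaussianPDF 0 a x * gaussianPDF 0 b (u - x) :=
        (measurable_gaussianPDF 0 a).mul
          ((measurable_gaussianPDF 0 b).comp (measurable_const.sub measurable_id))
      rw [lintegral_const_mul _ h3, pdf_conv_lintegral a b ha hb u]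
    simp_rw [fin]
    rw [gaussianReal_apply 0 hab, ← lintegral_indicator measurableSet_Iic _]
    congr 1; ext u
    by_cases h : u ∈ Set.Iic t
    · rw [Set.indicator_of_mem h, hind, Set.indicator_of_mem h, one_mul]
    · rw [Set.indicator_of_notMem h, hind, Set.indicator_of_notMem h, zero_mul]
  · have h4 : Measurable (Function.uncurry fun x u : ℝ =>
        ind u * (gaussianPDF 0 a x * gaussianPDF 0 b (u - x))) :=
      (hindmeas.comp measurable_snd).mul
        (((measurable_gaussianPDF 0 a).comp measurable_fst).mul
          ((measurable_gaussianPDF 0 b).comp (measurable_snd.sub measurable_fst)))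
    exact h4.aemeasurable

lemma measurable_finsum {m : ℕ} : Measurable fun w : Fin m → ℝ => ∑ i, w i :=
  Finset.measurable_sum _ fun i _ => measurable_pi_apply i

lemma gauss_sum (v : ℝ≥0) (hv : v ≠ 0) : ∀ k : ℕ,
    (Measure.pi fun _ : Fin (k + 1) => gaussianReal 0 v).map (fun w => ∑ i, w i) =
      gaussianReal 0 ((k + 1 : ℕ) * v) := by
  intro k
  induction k with
  | zero =>
    have h := measurePreserving_funUnique (gaussianReal 0 v) (Fin 1)
    have he : (fun w : Fin 1 → ℝ => ∑ i, w i) = MeasurableEquiv.funUnique (Fin 1) ℝ := by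
      funext w; simp [Fin.sum_univ_one, MeasurableEquiv.funUnique]
    rw [he]; refine h.map_eq.trans ?_
    norm_num
  | succ k ih =>
    have hp := measurePreserving_piFinSuccAbove (fun _ : Fin (k + 2) => gaussianReal 0 v) 0
    have hcomp : (fun w : Fin (k + 2) → ℝ => ∑ i, w i) =
        (fun p : ℝ × (Fin (k + 1) → ℝ) => p.1 + ∑ j, p.2 j) ∘
          (MeasurableEquiv.piFinSuccAbove (fun _ : Fin (k + 2) => ℝ) 0) := by
      funext w
      simp only [Function.comp_apply, MeasurableEquiv.piFinSuccAbove_apply]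
      rw [Fin.sum_univ_succ]
      simp [Fin.insertNthEquiv, Fin.succAbove_zero, Fin.tail]
    have hgm : Measurable fun p : ℝ × (Fin (k + 1) → ℝ) => p.1 + ∑ j, p.2 j :=
      measurable_fst.add (measurable_finsum.comp measurable_snd)
    rw [hcomp, ← Measure.map_map hgm (MeasurableEquiv.measurable _), hp.map_eq]
    have hsplit : (fun p : ℝ × (Fin (k + 1) → ℝ) => p.1 + ∑ j, p.2 j) =
        (fun q : ℝ × ℝ => q.1 + q.2) ∘ Prod.map id (fun w : Fin (k + 1) → ℝ => ∑ j, w j) := rfl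
    have haddm : Measurable fun q : ℝ × ℝ => q.1 + q.2 := measurable_fst.add measurable_snd
    have hpm : Measurable (Prod.map (id : ℝ → ℝ) fun w : Fin (k + 1) → ℝ => ∑ j, w j) :=
      measurable_id.prodMap measurable_finsum
    rw [hsplit, ← Measure.map_map haddm hpm,
      ← Measure.map_prod_map _ _ measurable_id measurable_finsum, Measure.map_id, ih,
      gauss_conv v _ hv (by positivity)]
    congr 1
    push_cast
    ring

lemma Qfun_nonneg (x : ℝ) : 0 ≤ Qfun x :=
  setIntegral_nonneg measurableSet_Ici fun z _ => by positivity

lemma gauss_Iic (v : ℝ≥0) (hv : v ≠ 0) (a : ℝ) :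
    gaussianReal 0 v (Set.Iic (-a)) = ENNReal.ofReal (Qfun (a / Real.sqrt v)) := by
  have hv' : (0:ℝ) < v := by exact_mod_cast hv.bot_lt
  have hsv : (0:ℝ) < Real.sqrt v := Real.sqrt_pos.2 hv'
  rw [gaussianReal_apply_eq_integral 0 hv]
  congr 1
  have heven : ∀ x : ℝ, gaussianPDFReal 0 v x = gaussianPDFReal 0 v (-x) := by
    intro x; simp [gaussianPDFReal, neg_sq]
  calc ∫ x in Set.Iic (-a), gaussianPDFReal 0 v x
      = ∫ x in Set.Iic (-a), gaussianPDFReal 0 v (-x) := by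
        apply integral_congr_ae (ae_of_all _ fun x => heven x)
    _ = ∫ x in Set.Ioi a, gaussianPDFReal 0 v x := by
        rw [integral_comp_neg_Iic, neg_neg]
    _ = Qfun (a / Real.sqrt v) := by
        have h2 := integral_comp_mul_left_Ioi (fun x => gaussianPDFReal 0 v x)
          (a / Real.sqrt v) hsv
        rw [mul_div_cancel₀ _ hsv.ne'] at h2
        have hpt : ∀ x : ℝ, gaussianPDFReal 0 v (Real.sqrt v * x) =
            (Real.sqrt v)⁻¹ * ((1 / Real.sqrt (2 * Real.pi)) * Real.exp (-x ^ 2 / 2)) := by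
          intro x
          simp only [gaussianPDFReal, sub_zero]
          rw [mul_pow, Real.sq_sqrt hv'.le, show (2 : ℝ) * Real.pi * v = (2 * Real.pi) * v by ring,
            Real.sqrt_mul (by positivity), mul_inv]
          rw [show -(↑v * x ^ 2) / (2 * ↑v) = -x ^ 2 / 2 by field_simp]
          ring
        simp_rw [hpt] at h2
        rw [integral_const_mul] at h2
        have : ∫ x in Set.Ioi (a / Real.sqrt v),
            (1 / Real.sqrt (2 * Real.pi)) * Real.exp (-x ^ 2 / 2) = Qfun (a / Real.sqrt v) := by
          rw [Qfun, integral_Ici_eq_integral_Ioi]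
        rw [this, smul_eq_mul] at h2
        have := mul_left_cancel₀ (inv_ne_zero hsv.ne') h2
        linarith [this]

open scoped Classical in
lemma count_decomp {ι : Type*} [Fintype ι] (S : Set ℝ) (m : ℕ) :
    {w : ι → ℝ | (Finset.univ.filter fun i => w i ∈ S).card = m} =
      ⋃ T ∈ Finset.powersetCard m (Finset.univ : Finset ι),
        Set.pi Set.univ (fun i => if i ∈ T then S else Sᶜ) := by
  ext w
  simp only [Set.mem_setOf_eq, Set.mem_iUnion, Finset.mem_powersetCard, Set.mem_pi,
    Set.mem_univ, forall_true_left]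
  constructor
  · intro h
    refine ⟨Finset.univ.filter fun i => w i ∈ S, ⟨Finset.subset_univ _, h⟩, fun i => ?_⟩
    by_cases hi : w i ∈ S
    · simp [hi]
    · simp [hi]
  · rintro ⟨T, ⟨-, hcard⟩, hT⟩
    have : (Finset.univ.filter fun i => w i ∈ S) = T := by
      ext i
      simp only [Finset.mem_filter, Finset.mem_univ, true_and]
      constructor
      · intro hw
        by_contra hiT
        have := hT i; rw [if_neg hiT] at this; exact this hw
      · intro hiT
        have := hT i; rwa [if_pos hiT] at this
    rw [this, hcard]

open scoped Classical in
lemma count_measurable {ι : Type*} [Fintype ι] {S : Set ℝ} (hS : MeasurableSet S) (m : ℕ) :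
    MeasurableSet {w : ι → ℝ | (Finset.univ.filter fun i => w i ∈ S).card = m} := by
  rw [count_decomp]
  refine Finset.measurableSet_biUnion _ fun T _ => ?_
  exact MeasurableSet.pi (Set.to_countable _) fun i _ => by
    by_cases hi : i ∈ T <;> simp [hi, hS, hS.compl]

open scoped Classical in
lemma binom_measure {ι : Type*} [Fintype ι] (μ : Measure ℝ) [IsProbabilityMeasure μ]
    {S : Set ℝ} (hS : MeasurableSet S) (m : ℕ) :
    (Measure.pi fun _ : ι => μ) {w : ι → ℝ | (Finset.univ.filter fun i => w i ∈ S).card = m} =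
      ((Fintype.card ι).choose m : ℝ≥0∞) * (μ S) ^ m * (μ Sᶜ) ^ (Fintype.card ι - m) := by
  rw [count_decomp]
  rw [measure_biUnion_finset ?hd fun T _ => MeasurableSet.pi (Set.to_countable _)
    fun i _ => by by_cases hi : i ∈ T <;> simp [hi, hS, hS.compl]]
  case hd =>
    intro T hT T' hT' hne
    simp only [Function.onFun]
    rw [Set.disjoint_left]
    intro w hw hw'
    apply hne
    have h1 : ∀ i, w i ∈ (if i ∈ T then S else Sᶜ) := fun i => hw i (Set.mem_univ i)
    have h2 : ∀ i, w i ∈ (if i ∈ T' then S else Sᶜ) := fun i => hw' i (Set.mem_univ i)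
    ext i
    constructor
    · intro hi
      by_contra hi'
      have := h2 i; rw [if_neg hi'] at this
      have h := h1 i; rw [if_pos hi] at h
      exact this h
    · intro hi
      by_contra hi'
      have := h1 i; rw [if_neg hi'] at this
      have h := h2 i; rw [if_pos hi] at h
      exact this h
  have hterm : ∀ T ∈ Finset.powersetCard m (Finset.univ : Finset ι),
      (Measure.pi fun _ : ι => μ) (Set.pi Set.univ (fun i => if i ∈ T then S else Sᶜ)) =
        (μ S) ^ m * (μ Sᶜ) ^ (Fintype.card ι - m) := by
    intro T hT
    obtain ⟨-, hcard⟩ := Finset.mem_powersetCard.1 hT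
    rw [Measure.pi_pi]
    have : ∀ i, μ (if i ∈ T then S else Sᶜ) = if i ∈ T then μ S else μ Sᶜ := fun i => apply_ite μ _ _ _
    simp_rw [this]
    rw [← Finset.prod_filter_mul_prod_filter_not Finset.univ (· ∈ T)]
    rw [Finset.prod_congr rfl (fun i hi => if_pos (Finset.mem_filter.1 hi).2),
      Finset.prod_congr rfl (fun i hi => if_neg (Finset.mem_filter.1 hi).2),
      Finset.prod_const, Finset.prod_const]
    congr 1
    · rw [Finset.filter_mem_eq_inter, Finset.univ_inter, hcard]
    · rw [← hcard]
      congr 1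
      have : Finset.univ.filter (fun i => ¬ i ∈ T) = Tᶜ := by
        ext i; simp [Finset.mem_compl]
      rw [this, Finset.card_compl]
  rw [Finset.sum_congr rfl hterm, Finset.sum_const, Finset.card_powersetCard,
    Finset.card_univ, nsmul_eq_mul, mul_assoc]

open scoped Classical in
lemma binom_measure_le {ι : Type*} [Fintype ι] (μ : Measure ℝ) [IsProbabilityMeasure μ]
    {S : Set ℝ} (hS : MeasurableSet S) (k : ℕ) :
    (Measure.pi fun _ : ι => μ) {w : ι → ℝ | (Finset.univ.filter fun i => w i ∈ S).card ≤ k} =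
      ∑ m ∈ Finset.range (k + 1),
        ((Fintype.card ι).choose m : ℝ≥0∞) * (μ S) ^ m * (μ Sᶜ) ^ (Fintype.card ι - m) := by
  have hdec : {w : ι → ℝ | (Finset.univ.filter fun i => w i ∈ S).card ≤ k} =
      ⋃ m ∈ Finset.range (k + 1),
        {w : ι → ℝ | (Finset.univ.filter fun i => w i ∈ S).card = m} := by
    ext w
    simp [Nat.lt_succ_iff]
  rw [hdec, measure_biUnion_finset ?hd fun m _ => count_measurable hS m]
  case hd =>
    intro m _ m' _ hne
    simp only [Function.onFun]
    rw [Set.disjoint_left]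
    intro w hw hw'
    exact hne (hw.symm.trans hw')
  exact Finset.sum_congr rfl fun m _ => binom_measure μ hS m

open scoped Classical in
lemma count_le_measurable {ι : Type*} [Fintype ι] {S : Set ℝ} (hS : MeasurableSet S) (k : ℕ) :
    MeasurableSet {w : ι → ℝ | (Finset.univ.filter fun i => w i ∈ S).card ≤ k} := by
  have hdec : {w : ι → ℝ | (Finset.univ.filter fun i => w i ∈ S).card ≤ k} =
      ⋃ m ∈ Finset.range (k + 1),
        {w : ι → ℝ | (Finset.univ.filter fun i => w i ∈ S).card = m} := by
    ext w; simp [Nat.lt_succ_iff]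
  rw [hdec]
  exact Finset.measurableSet_biUnion _ fun m _ => count_measurable hS m

lemma sum_set_measurable {ι : Type*} [Fintype ι] (a : ℝ) :
    MeasurableSet {w : ι → ℝ | ∑ i, w i ≤ -a} := by
  have : Measurable fun w : ι → ℝ => ∑ i, w i :=
    Finset.measurable_sum _ fun i _ => measurable_pi_apply i
  exact this measurableSet_Iic

lemma gauss_block (v : ℝ≥0) (hv : v ≠ 0) {ι : Type*} [Fintype ι] (d : ℕ)
    (hcard : Fintype.card ι = d) (hd : 0 < d) (a : ℝ) :
    (Measure.pi fun _ : ι => gaussianReal 0 v) {w : ι → ℝ | ∑ i, w i ≤ -a} =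
      ENNReal.ofReal (Qfun (a / Real.sqrt ((d : ℝ) * v))) := by
  obtain ⟨d', rfl⟩ : ∃ d', d = d' + 1 := ⟨d - 1, (Nat.succ_pred_eq_of_pos hd).symm⟩
  have f : Fin (d' + 1) ≃ ι := (Fintype.equivFinOfCardEq hcard).symm
  have hmp := measurePreserving_piCongrLeft (fun _ : ι => gaussianReal 0 v) f
  have hpre : (MeasurableEquiv.piCongrLeft (fun _ : ι => ℝ) f) ⁻¹' {w : ι → ℝ | ∑ i, w i ≤ -a}
      = {w : Fin (d' + 1) → ℝ | ∑ i, w i ≤ -a} := by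
    ext w
    simp only [Set.mem_preimage, Set.mem_setOf_eq]
    rw [← Equiv.sum_comp f (fun i => (MeasurableEquiv.piCongrLeft (fun _ : ι => ℝ) f) w i)]
    simp_rw [MeasurableEquiv.piCongrLeft_apply_apply]
  rw [← hmp.measure_preimage (sum_set_measurable a).nullMeasurableSet, hpre]
  have hrepr : {w : Fin (d' + 1) → ℝ | ∑ i, w i ≤ -a} =
      (fun w : Fin (d' + 1) → ℝ => ∑ i, w i) ⁻¹' Set.Iic (-a) := rfl
  have hne : ((d' + 1 : ℕ) : ℝ≥0) * v ≠ 0 := by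
    intro h
    rcases mul_eq_zero.1 h with h | h
    · exact Nat.cast_ne_zero.2 (Nat.succ_ne_zero d') h
    · exact hv h
  rw [hrepr, ← Measure.map_apply measurable_finsum measurableSet_Iic, gauss_sum v hv d',
    gauss_Iic _ hne a]
  norm_num

noncomputable def binomSum (p : ℝ) (N a b : ℕ) : ℝ :=
  ∑ m ∈ Finset.Icc a b, (N.choose m : ℝ) * p ^ m * (1 - p) ^ (N - m)

open scoped Classical in
theorem pairwise_error_with_region (n d dstar : ℕ) (hd : 0 < d) (hdn : d ≤ n)
    (σ : ℝ) (hσ : 0 < σ)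
    (s c : Fin n → ℝ) (hs : ∀ t, s t = 1)
    (hc : ∀ t : Fin n, c t = if (t : ℕ) < d then -1 else 1) :
    (Measure.pi fun _ : Fin n => gaussianReal 0 (Real.toNNReal (σ ^ 2)))
      {z : Fin n → ℝ |
        Real.sqrt (∑ t, (s t + z t - c t) ^ 2) ≤
          Real.sqrt (∑ t, (s t + z t - s t) ^ 2) ∧
        (Finset.univ.filter fun t => s t + z t ≤ 0).card ≤ dstar}
      ≤ ENNReal.ofReal
          (Qfun (Real.sqrt d / σ) *
            binomSum (Qfun (1 / σ)) (n - d) 0 (dstar - 1)) := by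
  set v : ℝ≥0 := Real.toNNReal (σ ^ 2) with hvdef
  have hv : v ≠ 0 := by
    simp only [hvdef, ne_eq, Real.toNNReal_eq_zero, not_le]
    positivity
  have hvr : (v : ℝ) = σ ^ 2 := Real.coe_toNNReal _ (sq_nonneg σ)
  set P : Fin n → Prop := fun t => (t : ℕ) < d with hP
  -- card of the filter
  have hcard : (Finset.univ.filter fun t : Fin n => (t : ℕ) < d).card = d := by
    have h := Finset.card_bij
      (s := Finset.univ.filter fun t : Fin n => (t : ℕ) < d) (t := (Finset.univ : Finset (Fin d)))
      (fun (t : Fin n) (ht : t ∈ Finset.univ.filter fun t : Fin n => (t : ℕ) < d)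
        => (⟨(t : ℕ), (Finset.mem_filter.1 ht).2⟩ : Fin d))
      (fun a ha => Finset.mem_univ _)
      (fun a ha b hb hab => by simp only [Fin.mk.injEq] at hab; exact Fin.ext hab)
      (fun b _ =>
        ⟨⟨(b : ℕ), lt_of_lt_of_le b.2 hdn⟩, Finset.mem_filter.2 ⟨Finset.mem_univ _, b.2⟩, rfl⟩)
    simpa using h
  have hcard1 : Fintype.card {t : Fin n // P t} = d := by
    rw [Fintype.card_subtype]; exact hcard
  have hcard2 : Fintype.card {t : Fin n // ¬ P t} = n - d := by
    rw [Fintype.card_subtype_compl, hcard1, Fintype.card_fin]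
  -- the blocks
  set A : Set ({t : Fin n // P t} → ℝ) := {w | ∑ i, w i ≤ -(d : ℝ)} with hA
  set B : Set ({t : Fin n // ¬ P t} → ℝ) :=
    {w | (Finset.univ.filter fun i => w i ∈ Set.Iic (-1 : ℝ)).card ≤ dstar - 1} with hB
  have hAmeas : MeasurableSet A := sum_set_measurable (d : ℝ)
  have hBmeas : MeasurableSet B := count_le_measurable measurableSet_Iic (dstar - 1)
  have hmp := measurePreserving_piEquivPiSubtypeProd (fun _ : Fin n => gaussianReal 0 v) P
  set e := MeasurableEquiv.piEquivPiSubtypeProd (fun _ : Fin n => ℝ) P with he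
  -- deterministic inclusion
  have hsub : {z : Fin n → ℝ |
        Real.sqrt (∑ t, (s t + z t - c t) ^ 2) ≤
          Real.sqrt (∑ t, (s t + z t - s t) ^ 2) ∧
        (Finset.univ.filter fun t => s t + z t ≤ 0).card ≤ dstar} ⊆ e ⁻¹' (A ×ˢ B) := by
    intro z hz
    obtain ⟨h1, h2⟩ := hz
    -- turn the sqrt inequality into a sum inequality
    have hXnn : (0:ℝ) ≤ ∑ t, (s t + z t - c t) ^ 2 := Finset.sum_nonneg fun t _ => sq_nonneg _
    have hYnn : (0:ℝ) ≤ ∑ t, (s t + z t - s t) ^ 2 := Finset.sum_nonneg fun t _ => sq_nonneg _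
    have hXY : (∑ t, (s t + z t - c t) ^ 2) ≤ ∑ t, (s t + z t - s t) ^ 2 := by
      have := pow_le_pow_left₀ (Real.sqrt_nonneg _) h1 2
      rwa [Real.sq_sqrt hXnn, Real.sq_sqrt hYnn] at this
    have hXeq : (∑ t, (s t + z t - c t) ^ 2) =
        (∑ t ∈ Finset.univ.filter fun t : Fin n => (t : ℕ) < d, (z t + 2) ^ 2) +
          ∑ t ∈ Finset.univ.filter fun t : Fin n => ¬ (t : ℕ) < d, (z t) ^ 2 := by
      rw [← Finset.sum_ite (f := fun t => (z t + 2)^2) (g := fun t => (z t)^2)]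
      apply Finset.sum_congr rfl
      intro t _
      rw [hs, hc]
      by_cases ht : (t : ℕ) < d <;> simp [ht] <;> ring
    have hYeq : (∑ t, (s t + z t - s t) ^ 2) =
        (∑ t ∈ Finset.univ.filter fun t : Fin n => (t : ℕ) < d, (z t) ^ 2) +
          ∑ t ∈ Finset.univ.filter fun t : Fin n => ¬ (t : ℕ) < d, (z t) ^ 2 := by
      rw [Finset.sum_filter_add_sum_filter_not]
      apply Finset.sum_congr rfl
      intro t _; ring
    have hsum : (∑ t ∈ Finset.univ.filter fun t : Fin n => (t : ℕ) < d, z t) ≤ -(d : ℝ) := by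
      rw [hXeq, hYeq] at hXY
      have h4 : (∑ t ∈ Finset.univ.filter fun t : Fin n => (t : ℕ) < d, (z t + 2) ^ 2) ≤
          ∑ t ∈ Finset.univ.filter fun t : Fin n => (t : ℕ) < d, (z t) ^ 2 := by linarith
      have hexp : ∀ t : Fin n, (z t + 2) ^ 2 = (z t) ^ 2 + (4 * z t + 4) := by intro t; ring
      rw [Finset.sum_congr rfl fun t _ => hexp t, Finset.sum_add_distrib] at h4
      have h5 : (∑ t ∈ Finset.univ.filter fun t : Fin n => (t : ℕ) < d, (4 * z t + 4)) ≤ 0 := by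
        linarith
      rw [Finset.sum_add_distrib, Finset.sum_const, ← Finset.mul_sum, hcard] at h5
      rw [nsmul_eq_mul] at h5
      linarith
    -- existence of a bad coordinate among the first d
    have hex : ∃ t0 : Fin n, (t0 : ℕ) < d ∧ z t0 ≤ -1 := by
      by_contra hcon
      push_neg at hcon
      have hlt : -(d : ℝ) <
          ∑ t ∈ Finset.univ.filter fun t : Fin n => (t : ℕ) < d, z t := by
        have hne : (Finset.univ.filter fun t : Fin n => (t : ℕ) < d).Nonempty := by
          rw [← Finset.card_pos, hcard]; exact hd
        have := Finset.sum_lt_sum_of_nonempty hne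
          (f := fun _ => (-1 : ℝ)) (g := fun t => z t) ?_
        · rw [Finset.sum_const, hcard] at this
          simpa using this
        · intro t ht
          exact hcon t (Finset.mem_filter.1 ht).2
      linarith
    obtain ⟨t0, ht0d, ht0z⟩ := hex
    -- membership
    constructor
    · -- A part
      show (∑ i : {t : Fin n // P t}, z i) ≤ -(d : ℝ)
      rw [← Finset.sum_subtype (Finset.univ.filter fun t : Fin n => (t : ℕ) < d)
        (fun t => ⟨fun h => (Finset.mem_filter.1 h).2,
          fun h => Finset.mem_filter.2 ⟨Finset.mem_univ t, h⟩⟩) z]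
      exact hsum
    · -- B part
      show (Finset.univ.filter fun i : {t : Fin n // ¬ P t} => z i.val ∈ Set.Iic (-1 : ℝ)).card ≤
        dstar - 1
      have hcc : (Finset.univ.filter fun i : {t : Fin n // ¬ P t} =>
          z i.val ∈ Set.Iic (-1 : ℝ)).card =
          (Finset.univ.filter fun t : Fin n => ¬ P t ∧ z t ≤ -1).card := by
        apply Finset.card_bij (fun i _ => i.val)
        · intro i hi
          exact Finset.mem_filter.2 ⟨Finset.mem_univ _, i.2, (Finset.mem_filter.1 hi).2⟩
        · intro i _ j _ hij
          exact Subtype.ext hij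
        · intro t ht
          obtain ⟨-, hnP, hz⟩ := Finset.mem_filter.1 ht
          exact ⟨⟨t, hnP⟩, Finset.mem_filter.2 ⟨Finset.mem_univ _, hz⟩, rfl⟩
      rw [hcc]
      have hfilter_eq : (Finset.univ.filter fun t : Fin n => s t + z t ≤ 0) =
          Finset.univ.filter fun t : Fin n => z t ≤ -1 := by
        apply Finset.filter_congr
        intro t _
        rw [hs]
        constructor <;> intro h <;> linarith
      rw [hfilter_eq] at h2
      have hnotmem : t0 ∉ Finset.univ.filter fun t : Fin n => ¬ P t ∧ z t ≤ -1 := by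
        intro hmem
        exact (Finset.mem_filter.1 hmem).2.1 ht0d
      have hsubs : insert t0 (Finset.univ.filter fun t : Fin n => ¬ P t ∧ z t ≤ -1) ⊆
          Finset.univ.filter fun t : Fin n => z t ≤ -1 := by
        intro t ht
        rcases Finset.mem_insert.1 ht with rfl | ht
        · exact Finset.mem_filter.2 ⟨Finset.mem_univ _, ht0z⟩
        · exact Finset.mem_filter.2 ⟨Finset.mem_univ _, (Finset.mem_filter.1 ht).2.2⟩
      have := Finset.card_le_card hsubs
      rw [Finset.card_insert_of_notMem hnotmem] at this
      omega
  -- assemble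
  have hq1 : (Measure.pi fun _ : {t : Fin n // P t} => gaussianReal 0 v) A =
      ENNReal.ofReal (Qfun (Real.sqrt d / σ)) := by
    rw [hA, gauss_block v hv d hcard1 hd (d : ℝ)]
    congr 2
    rw [hvr]
    have hd0 : (0:ℝ) < d := by exact_mod_cast hd
    have hsd : (0:ℝ) < Real.sqrt d := Real.sqrt_pos.2 hd0
    have hsq : Real.sqrt ((d:ℝ) * σ ^ 2) = Real.sqrt d * σ := by
      rw [Real.sqrt_mul hd0.le, Real.sqrt_sq hσ.le]
    rw [hsq]
    calc (d:ℝ) / (Real.sqrt d * σ) = (Real.sqrt d * Real.sqrt d) / (Real.sqrt d * σ) := by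
          rw [Real.mul_self_sqrt hd0.le]
      _ = Real.sqrt d / σ := mul_div_mul_left _ _ hsd.ne'
  set p : ℝ := Qfun (1 / σ) with hpdef
  have hp0 : 0 ≤ p := Qfun_nonneg _
  have hμS : gaussianReal 0 v (Set.Iic (-1 : ℝ)) = ENNReal.ofReal p := by
    rw [show (Set.Iic (-1 : ℝ)) = Set.Iic (-(1:ℝ)) by norm_num, gauss_Iic v hv 1]
    congr 2
    rw [hvr, Real.sqrt_sq hσ.le]
  have hp1 : p ≤ 1 := by
    have := prob_le_one (μ := gaussianReal 0 v) (s := Set.Iic (-1 : ℝ))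
    rw [hμS] at this
    exact ENNReal.ofReal_le_one.1 this
  have hμSc : gaussianReal 0 v (Set.Iic (-1 : ℝ))ᶜ = ENNReal.ofReal (1 - p) := by
    rw [prob_compl_eq_one_sub measurableSet_Iic, hμS, ← ENNReal.ofReal_one,
      ← ENNReal.ofReal_sub _ hp0]
  have hq2 : (Measure.pi fun _ : {t : Fin n // ¬ P t} => gaussianReal 0 v) B =
      ENNReal.ofReal (binomSum p (n - d) 0 (dstar - 1)) := by
    rw [hB, show (Measure.pi fun _ : {t : Fin n // ¬ P t} => gaussianReal 0 v)
        {w | (Finset.univ.filter fun i => w i ∈ Set.Iic (-1 : ℝ)).card ≤ dstar - 1} =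
        ∑ m ∈ Finset.range (dstar - 1 + 1),
          ((Fintype.card {t : Fin n // ¬ P t}).choose m : ℝ≥0∞) *
            (gaussianReal 0 v (Set.Iic (-1 : ℝ))) ^ m *
            (gaussianReal 0 v (Set.Iic (-1 : ℝ))ᶜ) ^ (Fintype.card {t : Fin n // ¬ P t} - m) by
        convert binom_measure_le (gaussianReal 0 v) measurableSet_Iic (dstar - 1)]
    rw [binomSum, show Finset.Icc 0 (dstar - 1) = Finset.range (dstar - 1 + 1) by
      rw [← Finset.Ico_add_one_right_eq_Icc, Nat.Ico_zero_eq_range]]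
    rw [ENNReal.ofReal_sum_of_nonneg (fun m _ => by
      have h1p : (0:ℝ) ≤ 1 - p := by linarith
      positivity)]
    apply Finset.sum_congr rfl
    intro m _
    rw [hcard2, hμS, hμSc, ENNReal.ofReal_mul (by positivity), ENNReal.ofReal_mul (by positivity),
      ENNReal.ofReal_natCast, ENNReal.ofReal_pow hp0, ENNReal.ofReal_pow (by linarith)]
  refine le_trans (measure_mono hsub) ?_
  rw [hmp.measure_preimage (hAmeas.prod hBmeas).nullMeasurableSet, Measure.prod_prod, hq1, hq2,
    ← ENNReal.ofReal_mul (Qfun_nonneg _)]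
end
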